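/- Let r be a positive integer and e_1,...,e_r integers. Suppose that for every permutation s ∈ S_r, Φ_{e_{s(1)},...,e_{s(r)}}(x) = x as rational functions. Then e_1 = e_2 = ... = e_r and e_1 ∈ {-1, 0, 1}. -/
import Mathlib


open Matrix

/-- The 2×2 matrix of the Möbius transformation `x ↦ 1/(e - x)`. -/
noncomputable def mobA (e : ℂ) : Matrix (Fin 2) (Fin 2) ℂ := !![0, 1; -1, e]

/-- The matrix of the continued fraction Möbius transformation
`Φ_{e₁,…,e_r}(x) = 1/(e_r - 1/(e_{r-1} - ⋯ - 1/(e₁ - x)))`, for the list `[e₁, …, e_r]`. -/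
noncomputable def phiL (l : List ℂ) : Matrix (Fin 2) (Fin 2) ℂ :=
  l.foldl (fun M e => mobA e * M) 1

/-- `M` and `N` define the same Möbius transformation (equality as rational functions). -/
def MobiusEq (M N : Matrix (Fin 2) (Fin 2) ℂ) : Prop := ∃ c : ℂ, c ≠ 0 ∧ M = c • N

/-- `M` defines the identity Möbius transformation `x ↦ x`. -/
def IsMobiusId (M : Matrix (Fin 2) (Fin 2) ℂ) : Prop := MobiusEq M 1

lemma phiL_foldl (l : List ℂ) (X : Matrix (Fin 2) (Fin 2) ℂ) :
    l.foldl (fun M e => mobA e * M) X = phiL l * X := by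
  induction l generalizing X with
  | nil => simp [phiL]
  | cons a l ih =>
    rw [List.foldl_cons, ih]
    have h2 : phiL (a :: l) = phiL l * (mobA a * 1) := by
      rw [phiL, List.foldl_cons]; exact ih _
    rw [h2, mul_one, mul_assoc]

lemma phiL_cons (x : ℂ) (l : List ℂ) : phiL (x :: l) = phiL l * mobA x := by
  rw [phiL, List.foldl_cons, phiL_foldl]; simp

lemma det_mobA (e : ℂ) : (mobA e).det = 1 := by
  simp [mobA, Matrix.det_fin_two_of]

lemma det_phiL (l : List ℂ) : (phiL l).det = 1 := by
  induction l with
  | nil => simp [phiL]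
  | cons a l ih => rw [phiL_cons, Matrix.det_mul, det_mobA, ih, one_mul]

lemma mobA_mul (a b : ℂ) : mobA a * mobA b = !![-1, b; -a, a*b - 1] := by
  ext i j
  fin_cases i <;> fin_cases j <;>
    simp [mobA, Matrix.mul_apply, Fin.sum_univ_two] <;> ring

/-- Chebyshev-like integer sequence: `u 0 = 0`, `u 1 = 1`, `u (n+2) = a u (n+1) - u n`. -/
def useq (a : ℤ) : ℕ → ℤ
  | 0 => 0
  | 1 => 1
  | n+2 => a * useq a (n+1) - useq a n

lemma mobA_pow (a : ℤ) : ∀ n : ℕ, (mobA (a : ℂ)) ^ (n+1) =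
    !![-(useq a n : ℂ), (useq a (n+1) : ℂ); -((useq a (n+1) : ℂ)), (useq a (n+2) : ℂ)] := by
  intro n
  induction n with
  | zero =>
    ext i j
    fin_cases i <;> fin_cases j <;> simp [mobA, useq]
  | succ n ih =>
    rw [pow_succ, ih]
    ext i j
    fin_cases i <;> fin_cases j <;>
      simp [mobA, Matrix.mul_apply, Fin.sum_univ_two, useq] <;> ring

lemma useq_grow (a : ℤ) (ha : 2 ≤ |a|) :
    ∀ n : ℕ, (n : ℤ) ≤ |useq a n| ∧ |useq a n| + 1 ≤ |useq a (n+1)| := by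
  intro n
  induction n with
  | zero => simp [useq]
  | succ n ih =>
    obtain ⟨h1, h2⟩ := ih
    constructor
    · push_cast; linarith
    · have key : |a * useq a (n+1)| - |useq a n| ≤ |a * useq a (n+1) - useq a n| :=
        abs_sub_abs_le_abs_sub _ _
      have hm : |a * useq a (n+1)| = |a| * |useq a (n+1)| := abs_mul _ _
      have h3 : 2 * |useq a (n+1)| ≤ |a| * |useq a (n+1)| := by
        have := abs_nonneg (useq a (n+1))
        nlinarith
      show |useq a (n+1)| + 1 ≤ |useq a (n+2)|
      have huu : useq a (n+2) = a * useq a (n+1) - useq a n := rfl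
      rw [huu]
      linarith

lemma phiL_replicate (x : ℂ) : ∀ n : ℕ, phiL (List.replicate n x) = (mobA x) ^ n := by
  intro n
  induction n with
  | zero => simp [phiL]
  | succ n ih => rw [List.replicate_succ, phiL_cons, ih, pow_succ]

lemma ofFn_two {α : Type*} {n : ℕ} (f : Fin (n+2) → α) :
    List.ofFn f = f 0 :: f 1 :: List.ofFn (fun k : Fin n => f k.succ.succ) := by
  rw [List.ofFn_succ, List.ofFn_succ]
  simp [Fin.succ_zero_eq_one]

/-- Let `r ≥ 1` and `e₁,…,e_r` integers.  If `Φ_{e_{s(1)},…,e_{s(r)}}(x) = x` as rational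
functions for every permutation `s ∈ S_r`, then `e₁ = ⋯ = e_r` and `e₁ ∈ {-1, 0, 1}`. -/
theorem stmt_7 (r : ℕ) (hr : 1 ≤ r) (e : Fin r → ℤ)
    (h : ∀ s : Equiv.Perm (Fin r),
      IsMobiusId (phiL (List.ofFn fun i => ((e (s i) : ℤ) : ℂ)))) :
    (∀ i j, e i = e j) ∧ ∀ i, e i ∈ ({-1, 0, 1} : Set ℤ) := by
  have heq : ∀ i j, e i = e j := by
    intro i j
    by_cases hij : i = j
    · rw [hij]
    rcases Nat.lt_or_ge r 2 with hr2 | hr2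
    · exact absurd (Fin.ext (by omega : (i : ℕ) = (j : ℕ))) hij
    obtain ⟨n, rfl⟩ : ∃ n, r = n + 2 := ⟨r - 2, by omega⟩
    -- build a permutation with s 0 = i and s 1 = j
    set σ : Equiv.Perm (Fin (n+2)) := Equiv.swap 0 i with hσ
    set k : Fin (n+2) := σ j with hk
    have hk0 : k ≠ 0 := by
      intro hk0
      apply hij
      have : σ k = σ 0 := by rw [hk0]
      rw [hk, Equiv.swap_apply_self, Equiv.swap_apply_left] at this
      exact this.symm ▸ rfl
    set τ : Equiv.Perm (Fin (n+2)) := Equiv.swap 1 k with hτ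
    set s : Equiv.Perm (Fin (n+2)) := σ * τ with hs
    have h01 : (0 : Fin (n+2)) ≠ 1 := by simp [Fin.ext_iff]
    have hs0 : s 0 = i := by
      rw [hs, Equiv.Perm.mul_apply, hτ, Equiv.swap_apply_of_ne_of_ne h01 (Ne.symm hk0),
        hσ, Equiv.swap_apply_left]
    have hs1 : s 1 = j := by
      rw [hs, Equiv.Perm.mul_apply, hτ, Equiv.swap_apply_left, hk, hσ,
        Equiv.swap_apply_self]
    obtain ⟨c, hc, hC⟩ := h s
    obtain ⟨c', hc', hC'⟩ := h (s * Equiv.swap 0 1)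
    rw [ofFn_two] at hC
    rw [ofFn_two] at hC'
    simp only [Equiv.Perm.mul_apply] at hC'
    have hsw0 : Equiv.swap (0 : Fin (n+2)) 1 0 = 1 := Equiv.swap_apply_left _ _
    have hsw1 : Equiv.swap (0 : Fin (n+2)) 1 1 = 0 := Equiv.swap_apply_right _ _
    have hswk : ∀ m : Fin n, Equiv.swap (0 : Fin (n+2)) 1 m.succ.succ = m.succ.succ := by
      intro m
      exact Equiv.swap_apply_of_ne_of_ne (Fin.succ_ne_zero _) (Fin.succ_succ_ne_one _)
    simp only [hsw0, hsw1, hswk] at hC'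
    set a : ℂ := ((e (s 0) : ℤ) : ℂ) with ha
    set b : ℂ := ((e (s 1) : ℤ) : ℂ) with hb
    set t : List ℂ := List.ofFn (fun m : Fin n => ((e (s m.succ.succ) : ℤ) : ℂ)) with ht
    rw [phiL_cons, phiL_cons, mul_assoc] at hC hC'
    have hu : IsUnit (phiL t) := by
      rw [Matrix.isUnit_iff_isUnit_det, det_phiL]
      exact isUnit_one
    have key : c' • (mobA b * mobA a) = c • (mobA a * mobA b) := by
      apply hu.mul_left_cancel
      rw [Matrix.mul_smul, Matrix.mul_smul, hC, hC', smul_comm]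
    rw [mobA_mul, mobA_mul, ← Matrix.ext_iff] at key
    have k00 := key 0 0
    have k01 := key 0 1
    simp only [Matrix.smul_apply, Matrix.cons_val', Matrix.cons_val_zero, Matrix.cons_val_one,
      Matrix.head_cons, Matrix.empty_val', Matrix.cons_val_fin_one, Matrix.head_fin_const,
      Matrix.of_apply, smul_eq_mul] at k00 k01
    have hcc : c = c' := by linear_combination k00
    rw [hcc] at k01
    have hab : a = b := mul_left_cancel₀ hc' k01
    rw [ha, hb, hs0, hs1] at hab
    exact_mod_cast hab
  refine ⟨heq, ?_⟩
  intro i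
  obtain ⟨c, hc, hC⟩ := h 1
  simp only [Equiv.Perm.one_apply] at hC
  have hfun : (fun k : Fin r => ((e k : ℤ) : ℂ)) = fun _ : Fin r => ((e i : ℤ) : ℂ) := by
    funext k; rw [heq k i]
  rw [hfun, List.ofFn_const, phiL_replicate] at hC
  obtain ⟨m, rfl⟩ : ∃ m, r = m + 1 := ⟨r - 1, by omega⟩
  rw [mobA_pow] at hC
  rw [← Matrix.ext_iff] at hC
  have h01 := hC 0 1
  simp only [Matrix.smul_apply, Matrix.cons_val', Matrix.cons_val_zero, Matrix.cons_val_one,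
    Matrix.head_cons, Matrix.empty_val', Matrix.cons_val_fin_one, Matrix.of_apply,
    smul_eq_mul, Matrix.one_apply_ne (by decide : (0 : Fin 2) ≠ 1), mul_zero] at h01
  have hz : useq (e i) (m + 1) = 0 := by exact_mod_cast h01
  by_contra habs
  simp only [Set.mem_insert_iff, Set.mem_singleton_iff, not_or] at habs
  obtain ⟨h1, h2, h3⟩ := habs
  have ha2 : 2 ≤ |e i| := by
    rcases abs_cases (e i) with ⟨hh, hh'⟩ | ⟨hh, hh'⟩ <;> rw [hh] <;> omega
  have := (useq_grow (e i) ha2 (m + 1)).1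
  rw [hz] at this
  simp at this
  omega
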